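/- Let P = v1v2v3v4v5 be a path on 5 vertices with color lists satisfying |L(v1)| ≥ 2, |L(v2)| ≥ 3, |L(v3)| ≥ 3, |L(v4)| ≥ 2, |L(v5)| ≥ 2. Then P admits a 2-distance list coloring (vi and vj get distinct colors whenever |i−j| ≤ 2, each vi colored from L(vi)). -/
import Mathlib

lemma pick (s t : Finset ℕ) (h : s.card < t.card) : ∃ x ∈ t, x ∉ s := by
  have h2 := Finset.le_card_sdiff s t
  obtain ⟨x, hx⟩ := Finset.card_pos.mp (by omega : 0 < (t \ s).card)
  exact ⟨x, (Finset.mem_sdiff.mp hx).1, (Finset.mem_sdiff.mp hx).2⟩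

lemma pick2 (s : Finset ℕ) (a b : ℕ) (h : 3 ≤ s.card) : ∃ x ∈ s, x ≠ a ∧ x ≠ b := by
  obtain ⟨x, hx, hx2⟩ := pick {a, b} s (lt_of_le_of_lt (Finset.card_insert_le _ _)
    (by simp; omega))
  exact ⟨x, hx, by simpa using hx2⟩

lemma pick1 (s : Finset ℕ) (a : ℕ) (h : 2 ≤ s.card) : ∃ x ∈ s, x ≠ a := by
  obtain ⟨x, hx, hx2⟩ := pick {a} s (by simp; omega)
  exact ⟨x, hx, by simpa using hx2⟩

lemma build (L : Fin 5 → Finset ℕ) (c0 c1 c2 c3 c4 : ℕ)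
 (m0 : c0 ∈ L 0) (m1 : c1 ∈ L 1) (m2 : c2 ∈ L 2) (m3 : c3 ∈ L 3) (m4 : c4 ∈ L 4)
 (d01 : c0 ≠ c1) (d02 : c0 ≠ c2) (d12 : c1 ≠ c2) (d13 : c1 ≠ c3) (d23 : c2 ≠ c3)
 (d24 : c2 ≠ c4) (d34 : c3 ≠ c4) :
 ∃ c : Fin 5 → ℕ, (∀ i, c i ∈ L i) ∧
   ∀ i j : Fin 5, i.val < j.val → j.val ≤ i.val + 2 → c i ≠ c j := by
  refine ⟨![c0,c1,c2,c3,c4], ?_, ?_⟩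
  · intro i; fin_cases i <;> simpa
  · intro i j h1 h2; fin_cases i <;> fin_cases j <;> simp_all

/-- A path `v1 … v5` with list sizes at least 2, 3, 3, 2, 2 admits a
2-distance list coloring. -/
theorem stmt1 (L : Fin 5 → Finset ℕ)
    (h0 : 2 ≤ (L 0).card) (h1 : 3 ≤ (L 1).card) (h2 : 3 ≤ (L 2).card)
    (h3 : 2 ≤ (L 3).card) (h4 : 2 ≤ (L 4).card) :
    ∃ c : Fin 5 → ℕ, (∀ i, c i ∈ L i) ∧
      ∀ i j : Fin 5, i.val < j.val → j.val ≤ i.val + 2 → c i ≠ c j := by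
  obtain ⟨M0, s0, e0⟩ := Finset.exists_subset_card_eq h0
  obtain ⟨M1, s1, e1⟩ := Finset.exists_subset_card_eq h1
  obtain ⟨M2, s2, e2⟩ := Finset.exists_subset_card_eq h2
  obtain ⟨M3, s3, e3⟩ := Finset.exists_subset_card_eq h3
  obtain ⟨M4, s4, e4⟩ := Finset.exists_subset_card_eq h4
  by_cases hA : (M0 ∩ M3).Nonempty
  · -- recipe R3 : c0 = c3 = a
    obtain ⟨a, ha⟩ := hA
    have ha0 : a ∈ M0 := (Finset.mem_inter.mp ha).1
    have ha3 : a ∈ M3 := (Finset.mem_inter.mp ha).2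
    obtain ⟨c4, m4, n4a⟩ := pick1 M4 a (by omega)
    obtain ⟨c2, m2, n2a, n24⟩ := pick2 M2 a c4 (by omega)
    obtain ⟨c1, m1, n1a, n12⟩ := pick2 M1 a c2 (by omega)
    exact build L a c1 c2 a c4 (s0 ha0) (s1 m1) (s2 m2) (s3 ha3) (s4 m4)
      n1a.symm n2a.symm n12 n1a n2a n24 n4a.symm
  · have disj : ∀ x, x ∈ M0 → x ∈ M3 → False := by
      intro x hx0 hx3
      exact hA ⟨x, Finset.mem_inter.mpr ⟨hx0, hx3⟩⟩
    obtain ⟨c2, m2, n2M4⟩ := pick M4 M2 (by omega)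
    by_cases h3c : c2 ∈ M3
    · -- c2 ∈ M3; the other element of M3 is z
      have hcard : (M3.erase c2).card = 1 := by
        rw [Finset.card_erase_of_mem h3c, e3]
      obtain ⟨z, hz⟩ := Finset.card_eq_one.mp hcard
      have hzmem : z ∈ M3.erase c2 := hz ▸ Finset.mem_singleton_self z
      have hz3 : z ∈ M3 := Finset.mem_of_mem_erase hzmem
      have hzc2 : z ≠ c2 := (Finset.mem_erase.mp hzmem).1
      obtain ⟨c1, m1, n1c2, n1z⟩ := pick2 M1 c2 z (by omega)
      obtain ⟨c0, m0, n01⟩ := pick1 M0 c1 (by omega)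
      obtain ⟨c4, m4, n4z⟩ := pick1 M4 z (by omega)
      have n02 : c0 ≠ c2 := fun h => disj c0 m0 (h ▸ h3c)
      have n24 : c2 ≠ c4 := fun h => n2M4 (h ▸ m4)
      exact build L c0 c1 c2 z c4 (s0 m0) (s1 m1) (s2 m2) (s3 hz3) (s4 m4)
        n01 n02 n1c2 n1z hzc2.symm n24 n4z.symm
    · by_cases h0c : c2 ∈ M0
      · have hcard : (M0.erase c2).card = 1 := by
          rw [Finset.card_erase_of_mem h0c, e0]
        obtain ⟨z, hz⟩ := Finset.card_eq_one.mp hcard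
        have hzmem : z ∈ M0.erase c2 := hz ▸ Finset.mem_singleton_self z
        have hz0 : z ∈ M0 := Finset.mem_of_mem_erase hzmem
        have hzc2 : z ≠ c2 := (Finset.mem_erase.mp hzmem).1
        obtain ⟨c1, m1, n1c2, n1z⟩ := pick2 M1 c2 z (by omega)
        obtain ⟨c3, m3, n31⟩ := pick1 M3 c1 (by omega)
        obtain ⟨c4, m4, n43⟩ := pick1 M4 c3 (by omega)
        have n23 : c2 ≠ c3 := fun h => h3c (h ▸ m3)
        have n24 : c2 ≠ c4 := fun h => n2M4 (h ▸ m4)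
        exact build L z c1 c2 c3 c4 (s0 hz0) (s1 m1) (s2 m2) (s3 m3) (s4 m4)
          n1z.symm hzc2 n1c2 n31.symm n23 n24 n43.symm
      · obtain ⟨c1, m1, n1c2⟩ := pick1 M1 c2 (by omega)
        obtain ⟨c0, m0, n01⟩ := pick1 M0 c1 (by omega)
        obtain ⟨c3, m3, n31⟩ := pick1 M3 c1 (by omega)
        obtain ⟨c4, m4, n43⟩ := pick1 M4 c3 (by omega)
        have n02 : c0 ≠ c2 := fun h => h0c (h ▸ m0)
        have n23 : c2 ≠ c3 := fun h => h3c (h ▸ m3)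
        have n24 : c2 ≠ c4 := fun h => n2M4 (h ▸ m4)
        exact build L c0 c1 c2 c3 c4 (s0 m0) (s1 m1) (s2 m2) (s3 m3) (s4 m4)
          n01 n02 n1c2 n31.symm n23 n24 n43.symm
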